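/- Let k be a field, H a Hopf algebra over k whose antipode S satisfies S ∘ S = id, v : Matrix (Fin s) (Fin s) H a corepresentation matrix, and π : H →ₐ[k] Matrix (Fin n) (Fin n) k an algebra homomorphism. Set u := v.map π, an element of Matrix (Fin s) (Fin s) (Matrix (Fin n) (Fin n) k). Then u is invertible, its outer transpose uᵀ is invertible, and (uᵀ)⁻¹ = (u⁻¹)ᵀ; that is, u satisfies the equation (★). -/

import Mathlib

open Matrix TensorProduct

section Helpers

variable {k : Type*} [Field k] {H : Type*} [Ring H] [HopfAlgebra k H]

local notation "S" => HopfAlgebra.antipode (R := k) (A := H)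

lemma counit_smul_left (x : H) (r : Coalgebra.Repr k x (H × H)) :
    ∑ i ∈ r.index, Coalgebra.counit (R := k) (r.right i) • r.left i = x := by
  have h := congrArg (TensorProduct.rid k H) (Coalgebra.sum_tmul_counit_eq r)
  simp only [map_sum, TensorProduct.rid_tmul, one_smul] at h
  exact h

lemma counit_smul_right (x : H) (r : Coalgebra.Repr k x (H × H)) :
    ∑ i ∈ r.index, Coalgebra.counit (R := k) (r.left i) • r.right i = x := by
  have h := congrArg (TensorProduct.lid k H) (Coalgebra.sum_counit_tmul_eq r)
  simp only [map_sum, TensorProduct.lid_tmul, one_smul] at h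
  exact h

lemma swap_nested (f g h : H →ₗ[k] H) (x : H) (r : Coalgebra.Repr k x (H × H))
    (r1 : ∀ i, Coalgebra.Repr k (r.left i) (H × H)) (r2 : ∀ i, Coalgebra.Repr k (r.right i) (H × H)) :
    ∑ i ∈ r.index, ∑ q ∈ (r2 i).index,
      f (r.left i) * (g ((r2 i).left q) * h ((r2 i).right q)) =
    ∑ i ∈ r.index, ∑ p ∈ (r1 i).index,
      f ((r1 i).left p) * (g ((r1 i).right p) * h (r.right i)) := by
  have h2 := Coalgebra.sum_map_tmul_tmul_eq (R := k) f g h x (repr := r) (a₁ := r1) (a₂ := r2)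
  apply_fun (LinearMap.mul' k H ∘ₗ LinearMap.lTensor H (LinearMap.mul' k H)) at h2
  simpa [map_sum] using h2

lemma sum_antipode_mul_prod (x y : H) (rx : Coalgebra.Repr k x (H × H)) (ry : Coalgebra.Repr k y (H × H)) :
    ∑ p ∈ rx.index, ∑ q ∈ ry.index,
      S (rx.left p * ry.left q) * (rx.right p * ry.right q) =
      (Coalgebra.counit (R := k) x * Coalgebra.counit (R := k) y) • (1 : H) := by
  classical
  let r : Coalgebra.Repr k (x * y) ((H × H) × (H × H)) :=
    { index := rx.index ×ˢ ry.index
      left := fun pq => rx.left pq.1 * ry.left pq.2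
      right := fun pq => rx.right pq.1 * ry.right pq.2
      eq := by
        rw [Bialgebra.comul_mul, ← rx.eq, ← ry.eq, Finset.sum_mul_sum, Finset.sum_product]
        simp [Algebra.TensorProduct.tmul_mul_tmul] }
  have h := HopfAlgebra.sum_antipode_mul_eq_smul (R := k) r
  rw [Finset.sum_product (f := fun pq => S (rx.left pq.1 * ry.left pq.2) *
    (rx.right pq.1 * ry.right pq.2))] at h
  simpa [Bialgebra.counit_mul] using h

lemma sum4_comm {ι₁ κ₁ : Type*} {ι₂ : ι₁ → Type*} {κ₂ : κ₁ → Type*} {M : Type*} [AddCommMonoid M]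
    (s : Finset ι₁) (P : ∀ i, Finset (ι₂ i)) (t : Finset κ₁) (Q : ∀ j, Finset (κ₂ j))
    (f : ∀ i, ι₂ i → ∀ j, κ₂ j → M) :
    ∑ i ∈ s, ∑ p ∈ P i, ∑ j ∈ t, ∑ q ∈ Q j, f i p j q =
    ∑ j ∈ t, ∑ q ∈ Q j, ∑ i ∈ s, ∑ p ∈ P i, f i p j q := by
  calc ∑ i ∈ s, ∑ p ∈ P i, ∑ j ∈ t, ∑ q ∈ Q j, f i p j q
      = ∑ x ∈ s.sigma P, ∑ j ∈ t, ∑ q ∈ Q j, f x.1 x.2 j q :=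
        Finset.sum_sigma' s P (fun i p => ∑ j ∈ t, ∑ q ∈ Q j, f i p j q)
    _ = ∑ x ∈ s.sigma P, ∑ y ∈ t.sigma Q, f x.1 x.2 y.1 y.2 :=
        Finset.sum_congr rfl fun x _ => Finset.sum_sigma' t Q (fun j q => f x.1 x.2 j q)
    _ = ∑ y ∈ t.sigma Q, ∑ x ∈ s.sigma P, f x.1 x.2 y.1 y.2 := Finset.sum_comm
    _ = ∑ j ∈ t, ∑ q ∈ Q j, ∑ x ∈ s.sigma P, f x.1 x.2 j q :=
        (Finset.sum_sigma' t Q (fun j q => ∑ x ∈ s.sigma P, f x.1 x.2 j q)).symm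
    _ = ∑ j ∈ t, ∑ q ∈ Q j, ∑ i ∈ s, ∑ p ∈ P i, f i p j q :=
        Finset.sum_congr rfl fun j _ => Finset.sum_congr rfl fun q _ =>
          (Finset.sum_sigma' s P (fun i p => f i p j q)).symm

lemma collapse (c d e : H) (x : H) (r : Coalgebra.Repr k x (H × H)) :
    ∑ q ∈ r.index, c * ((d * r.left q) * (S (r.right q) * e)) =
      Coalgebra.counit (R := k) x • (c * (d * e)) := by
  have h := HopfAlgebra.sum_mul_antipode_eq_smul (R := k) r
  calc ∑ q ∈ r.index, c * ((d * r.left q) * (S (r.right q) * e))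
      = c * (d * ((∑ q ∈ r.index, r.left q * S (r.right q)) * e)) := by
        rw [Finset.sum_mul, Finset.mul_sum, Finset.mul_sum]
        exact Finset.sum_congr rfl fun q _ => by noncomm_ring
    _ = Coalgebra.counit (R := k) x • (c * (d * e)) := by
        rw [h]; simp [smul_mul_assoc, mul_smul_comm]

lemma collapse2 (c : H) (x : H) (r : Coalgebra.Repr k x (H × H)) :
    ∑ p ∈ r.index, c * (r.left p * S (r.right p)) = Coalgebra.counit (R := k) x • c := by
  rw [← Finset.mul_sum, HopfAlgebra.sum_mul_antipode_eq_smul]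
  simp [mul_smul_comm]

lemma sum_antipode_mul_prod' (x y : H) (rx : Coalgebra.Repr k x (H × H)) (ry : Coalgebra.Repr k y (H × H))
    (C : H) :
    ∑ p ∈ rx.index, ∑ q ∈ ry.index,
      S (rx.left p * ry.left q) * ((rx.right p * ry.right q) * C) =
      (Coalgebra.counit (R := k) x * Coalgebra.counit (R := k) y) • C := by
  have h := sum_antipode_mul_prod x y rx ry
  calc ∑ p ∈ rx.index, ∑ q ∈ ry.index,
      S (rx.left p * ry.left q) * ((rx.right p * ry.right q) * C)
      = (∑ p ∈ rx.index, ∑ q ∈ ry.index,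
          S (rx.left p * ry.left q) * (rx.right p * ry.right q)) * C := by
        rw [Finset.sum_mul]
        exact Finset.sum_congr rfl fun p _ => by
          rw [Finset.sum_mul]; exact Finset.sum_congr rfl fun q _ => by noncomm_ring
    _ = (Coalgebra.counit (R := k) x * Coalgebra.counit (R := k) y) • C := by
        rw [h, smul_mul_assoc, one_mul]


lemma antipode_one : S (1 : H) = 1 := by
  have h := HopfAlgebra.mul_antipode_rTensor_comul_apply (R := k) (a := (1 : H))
  simpa [Algebra.TensorProduct.one_def] using h

lemma antipode_mul (a b : H) : S (a * b) = S b * S a := by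
  classical
  let ra := Coalgebra.Repr.arbitrary k a
  let rb := Coalgebra.Repr.arbitrary k b
  let ra1 : ∀ i, Coalgebra.Repr k (ra.left i) (H × H) := fun i => Coalgebra.Repr.arbitrary k _
  let ra2 : ∀ i, Coalgebra.Repr k (ra.right i) (H × H) := fun i => Coalgebra.Repr.arbitrary k _
  let rb1 : ∀ j, Coalgebra.Repr k (rb.left j) (H × H) := fun j => Coalgebra.Repr.arbitrary k _
  let rb2 : ∀ j, Coalgebra.Repr k (rb.right j) (H × H) := fun j => Coalgebra.Repr.arbitrary k _
  calc S (a * b)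
      = ∑ i ∈ ra.index, ∑ j ∈ rb.index,
          Coalgebra.counit (R := k) (rb.right j) •
            Coalgebra.counit (R := k) (ra.right i) • S (ra.left i * rb.left j) := by
        conv_lhs => rw [← counit_smul_left a ra, ← counit_smul_left b rb]
        rw [Finset.sum_mul_sum]
        simp only [map_sum, _root_.map_smul, smul_mul_assoc, mul_smul_comm, smul_smul]
    _ = ∑ i ∈ ra.index, ∑ j ∈ rb.index, ∑ p ∈ (ra2 i).index, ∑ q ∈ (rb2 j).index,
          S (ra.left i * rb.left j) * (((ra2 i).left p * (rb2 j).left q) *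
            (S ((rb2 j).right q) * S ((ra2 i).right p))) := by
        refine Finset.sum_congr rfl fun i _ => Finset.sum_congr rfl fun j _ => ?_
        symm
        calc ∑ p ∈ (ra2 i).index, ∑ q ∈ (rb2 j).index,
            S (ra.left i * rb.left j) * (((ra2 i).left p * (rb2 j).left q) *
              (S ((rb2 j).right q) * S ((ra2 i).right p)))
            = ∑ p ∈ (ra2 i).index, Coalgebra.counit (R := k) (rb.right j) •
                (S (ra.left i * rb.left j) * ((ra2 i).left p * S ((ra2 i).right p))) :=
              Finset.sum_congr rfl fun p _ =>
                collapse (S (ra.left i * rb.left j)) ((ra2 i).left p) (S ((ra2 i).right p))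
                  (rb.right j) (rb2 j)
          _ = Coalgebra.counit (R := k) (rb.right j) • ∑ p ∈ (ra2 i).index,
                S (ra.left i * rb.left j) * ((ra2 i).left p * S ((ra2 i).right p)) :=
              (Finset.smul_sum).symm
          _ = Coalgebra.counit (R := k) (rb.right j) •
                Coalgebra.counit (R := k) (ra.right i) • S (ra.left i * rb.left j) := by
              rw [collapse2 _ (ra.right i) (ra2 i)]
    _ = ∑ i ∈ ra.index, ∑ p ∈ (ra2 i).index, ∑ j ∈ rb.index, ∑ q ∈ (rb2 j).index,
          S (ra.left i * rb.left j) * (((ra2 i).left p * (rb2 j).left q) *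
            (S ((rb2 j).right q) * S ((ra2 i).right p))) :=
        Finset.sum_congr rfl fun i _ => Finset.sum_comm
    _ = ∑ j ∈ rb.index, ∑ q ∈ (rb2 j).index, ∑ i ∈ ra.index, ∑ p ∈ (ra2 i).index,
          S (ra.left i * rb.left j) * (((ra2 i).left p * (rb2 j).left q) *
            (S ((rb2 j).right q) * S ((ra2 i).right p))) :=
        sum4_comm ra.index (fun i => (ra2 i).index) rb.index (fun j => (rb2 j).index) _
    _ = ∑ j ∈ rb.index, ∑ q ∈ (rb2 j).index, ∑ i ∈ ra.index, ∑ p ∈ (ra1 i).index,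
          S ((ra1 i).left p * rb.left j) * (((ra1 i).right p * (rb2 j).left q) *
            (S ((rb2 j).right q) * S (ra.right i))) := by
        refine Finset.sum_congr rfl fun j _ => Finset.sum_congr rfl fun q _ => ?_
        have h := swap_nested (S ∘ₗ LinearMap.mulRight k (rb.left j))
          (LinearMap.mulRight k ((rb2 j).left q))
          ((LinearMap.mulLeft k (S ((rb2 j).right q))) ∘ₗ HopfAlgebra.antipode (R := k))
          a ra ra1 ra2
        simpa using h
    _ = ∑ i ∈ ra.index, ∑ p ∈ (ra1 i).index, ∑ j ∈ rb.index, ∑ q ∈ (rb2 j).index,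
          S ((ra1 i).left p * rb.left j) * (((ra1 i).right p * (rb2 j).left q) *
            (S ((rb2 j).right q) * S (ra.right i))) :=
        (sum4_comm ra.index (fun i => (ra1 i).index) rb.index (fun j => (rb2 j).index) _).symm
    _ = ∑ i ∈ ra.index, ∑ p ∈ (ra1 i).index, ∑ j ∈ rb.index, ∑ q ∈ (rb1 j).index,
          S ((ra1 i).left p * (rb1 j).left q) * (((ra1 i).right p * (rb1 j).right q) *
            (S (rb.right j) * S (ra.right i))) := by
        refine Finset.sum_congr rfl fun i _ => Finset.sum_congr rfl fun p _ => ?_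
        have h := swap_nested (S ∘ₗ LinearMap.mulLeft k ((ra1 i).left p))
          (LinearMap.mulLeft k ((ra1 i).right p))
          ((LinearMap.mulRight k (S (ra.right i))) ∘ₗ HopfAlgebra.antipode (R := k))
          b rb rb1 rb2
        simpa using h
    _ = ∑ i ∈ ra.index, ∑ j ∈ rb.index, ∑ p ∈ (ra1 i).index, ∑ q ∈ (rb1 j).index,
          S ((ra1 i).left p * (rb1 j).left q) * (((ra1 i).right p * (rb1 j).right q) *
            (S (rb.right j) * S (ra.right i))) :=
        Finset.sum_congr rfl fun i _ => Finset.sum_comm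
    _ = ∑ i ∈ ra.index, ∑ j ∈ rb.index,
          (Coalgebra.counit (R := k) (ra.left i) * Coalgebra.counit (R := k) (rb.left j)) •
            (S (rb.right j) * S (ra.right i)) :=
        Finset.sum_congr rfl fun i _ => Finset.sum_congr rfl fun j _ =>
          sum_antipode_mul_prod' (ra.left i) (rb.left j) (ra1 i) (rb1 j) _
    _ = S b * S a := by
        conv_rhs => rw [← counit_smul_right b rb, ← counit_smul_right a ra]
        simp only [map_sum, _root_.map_smul]
        rw [Finset.sum_mul_sum]
        simp only [smul_mul_assoc, mul_smul_comm, smul_smul]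
        rw [Finset.sum_comm]


end Helpers

/-- If `H` is a Hopf algebra over a field `k` with involutive antipode,
`v` is a corepresentation matrix and `π` is an algebra homomorphism to a matrix algebra,
then `u := v.map π` satisfies the equation `(★)`: `u` is invertible, its outer transpose
`uᵀ` is invertible, and `(uᵀ)⁻¹ = (u⁻¹)ᵀ`. -/
theorem stmt0 {k : Type*} [Field k] {H : Type*} [Ring H] [HopfAlgebra k H]
    (hS : ∀ a : H, HopfAlgebra.antipode (R := k) (HopfAlgebra.antipode (R := k) a) = a)
    {s n : ℕ} (v : Matrix (Fin s) (Fin s) H)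
    (hv1 : ∀ i j, Coalgebra.comul (R := k) (v i j) = ∑ c, v i c ⊗ₜ[k] v c j)
    (hv2 : ∀ i j, Coalgebra.counit (R := k) (v i j) = if i = j then (1 : k) else 0)
    (π : H →ₐ[k] Matrix (Fin n) (Fin n) k) :
    IsUnit (v.map π) ∧ IsUnit (v.map π)ᵀ ∧
      Ring.inverse (v.map π)ᵀ = (Ring.inverse (v.map π))ᵀ := by
  classical
  have hA : ∀ i j : Fin s, ∑ c, HopfAlgebra.antipode (R := k) (v i c) * v c j
      = if i = j then (1 : H) else 0 := by
    intro i j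
    have h := HopfAlgebra.mul_antipode_rTensor_comul_apply (R := k) (a := v i j)
    rw [hv1] at h
    simp only [map_sum, LinearMap.rTensor_tmul, LinearMap.mul'_apply] at h
    rw [h, hv2]
    split <;> simp
  have hB : ∀ i j : Fin s, ∑ c, v i c * HopfAlgebra.antipode (R := k) (v c j)
      = if i = j then (1 : H) else 0 := by
    intro i j
    have h := HopfAlgebra.mul_antipode_lTensor_comul_apply (R := k) (a := v i j)
    rw [hv1] at h
    simp only [map_sum, LinearMap.lTensor_tmul, LinearMap.mul'_apply] at h
    rw [h, hv2]
    split <;> simp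
  have hC : ∀ i j : Fin s, ∑ c, HopfAlgebra.antipode (R := k) (v c i) * v j c
      = if i = j then (1 : H) else 0 := by
    intro i j
    have h := congrArg (HopfAlgebra.antipode (R := k)) (hA j i)
    rw [map_sum] at h
    simp only [antipode_mul, hS] at h
    rw [h, apply_ite (HopfAlgebra.antipode (R := k)), map_zero, antipode_one]
    simp [eq_comm]
  have hD : ∀ i j : Fin s, ∑ c, v c i * HopfAlgebra.antipode (R := k) (v j c)
      = if i = j then (1 : H) else 0 := by
    intro i j
    have h := congrArg (HopfAlgebra.antipode (R := k)) (hB j i)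
    rw [map_sum] at h
    simp only [antipode_mul, hS] at h
    rw [h, apply_ite (HopfAlgebra.antipode (R := k)), map_zero, antipode_one]
    simp [eq_comm]
  set u : Matrix (Fin s) (Fin s) (Matrix (Fin n) (Fin n) k) := v.map π with hu
  set w : Matrix (Fin s) (Fin s) (Matrix (Fin n) (Fin n) k) :=
    Matrix.of fun i j => π (HopfAlgebra.antipode (R := k) (v i j)) with hw
  have key : ∀ (x : Fin s → Fin s → Fin s → H) (i j : Fin s),
      (∀ i j : Fin s, ∑ c, x i j c = if i = j then (1 : H) else 0) →
      ∑ c, π (x i j c) = (1 : Matrix (Fin s) (Fin s) (Matrix (Fin n) (Fin n) k)) i j := by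
    intro x i j hx
    rw [← map_sum, hx i j]
    by_cases hij : i = j
    · simp [hij, Matrix.one_apply]
    · simp [hij, Matrix.one_apply]
  have huw : u * w = 1 := by
    refine Matrix.ext fun i j => ?_
    rw [Matrix.mul_apply]
    calc ∑ c, u i c * w c j
        = ∑ c, π (v i c * HopfAlgebra.antipode (R := k) (v c j)) := by
          refine Finset.sum_congr rfl fun c _ => ?_
          rw [_root_.map_mul]; rfl
      _ = (1 : Matrix (Fin s) (Fin s) (Matrix (Fin n) (Fin n) k)) i j :=
          key (fun i j c => v i c * HopfAlgebra.antipode (R := k) (v c j)) i j hB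
  have hwu : w * u = 1 := by
    refine Matrix.ext fun i j => ?_
    rw [Matrix.mul_apply]
    calc ∑ c, w i c * u c j
        = ∑ c, π (HopfAlgebra.antipode (R := k) (v i c) * v c j) := by
          refine Finset.sum_congr rfl fun c _ => ?_
          rw [_root_.map_mul]; rfl
      _ = (1 : Matrix (Fin s) (Fin s) (Matrix (Fin n) (Fin n) k)) i j :=
          key (fun i j c => HopfAlgebra.antipode (R := k) (v i c) * v c j) i j hA
  have hutwt : uᵀ * wᵀ = 1 := by
    refine Matrix.ext fun i j => ?_
    rw [Matrix.mul_apply]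
    calc ∑ c, uᵀ i c * wᵀ c j
        = ∑ c, π (v c i * HopfAlgebra.antipode (R := k) (v j c)) := by
          refine Finset.sum_congr rfl fun c _ => ?_
          rw [_root_.map_mul]; rfl
      _ = (1 : Matrix (Fin s) (Fin s) (Matrix (Fin n) (Fin n) k)) i j :=
          key (fun i j c => v c i * HopfAlgebra.antipode (R := k) (v j c)) i j hD
  have hwtut : wᵀ * uᵀ = 1 := by
    refine Matrix.ext fun i j => ?_
    rw [Matrix.mul_apply]
    calc ∑ c, wᵀ i c * uᵀ c j
        = ∑ c, π (HopfAlgebra.antipode (R := k) (v c i) * v j c) := by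
          refine Finset.sum_congr rfl fun c _ => ?_
          rw [_root_.map_mul]; rfl
      _ = (1 : Matrix (Fin s) (Fin s) (Matrix (Fin n) (Fin n) k)) i j :=
          key (fun i j c => HopfAlgebra.antipode (R := k) (v c i) * v j c) i j hC
  let U : (Matrix (Fin s) (Fin s) (Matrix (Fin n) (Fin n) k))ˣ := ⟨u, w, huw, hwu⟩
  let Ut : (Matrix (Fin s) (Fin s) (Matrix (Fin n) (Fin n) k))ˣ := ⟨uᵀ, wᵀ, hutwt, hwtut⟩
  refine ⟨⟨U, rfl⟩, ⟨Ut, rfl⟩, ?_⟩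
  have h1 : Ring.inverse u = w := Ring.inverse_unit U
  have h2 : Ring.inverse uᵀ = wᵀ := Ring.inverse_unit Ut
  rw [h1, h2]
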